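/- arXiv:2306.16179 — 3 statements merged into one kernel-verified Lean document; each statement's English description precedes it below -/
import Mathlib

section
/- Let q be a line path in a subshift X, and suppose c, d are nonempty finite words and x' ∈ X satisfy c x' = d x' with x' tail equivalent to q. Then c and d have the same length, and hence c = d. -/
/-- The iterated shift: `shiftN x n = σⁿ(x)`. -/
def shiftN {A : Type*} (x : ℕ → A) (n : ℕ) : ℕ → A := fun k => x (k + n)

/-- Tail equivalence: `x ∼ y` iff `σⁿ(x) = σᵐ(y)` for some `n, m ∈ ℕ`. -/
def tailEq {A : Type*} (x y : ℕ → A) : Prop := ∃ n m : ℕ, shiftN x n = shiftN y m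

/-- Concatenation of a finite word with an infinite sequence. -/
def wcat {A : Type*} (w : List A) (x : ℕ → A) : ℕ → A :=
  fun n => if h : n < w.length then w.get ⟨n, h⟩ else x (n - w.length)

/-- The language of `X`: finite words appearing in some element of `X`. -/
def inLang {A : Type*} (X : Set (ℕ → A)) (w : List A) : Prop :=
  ∃ x ∈ X, ∃ k : ℕ, ∀ i (h : i < w.length), w.get ⟨i, h⟩ = x (k + i)

/-- The periodic infinite word `w^∞`. -/
def perInf {A : Type*} (w : List A) (h : w ≠ []) : ℕ → A :=
  fun n => w.get ⟨n % w.length, Nat.mod_lt n (List.length_pos_iff.mpr h)⟩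

/-- `q` is a line path in `X`. -/
def IsLinePath {A : Type*} (X : Set (ℕ → A)) (q : ℕ → A) : Prop :=
  q ∈ X ∧ {x | x ∈ X ∧ x 0 = q 0} = {q} ∧
    ∀ (β : List A) (hβ : β ≠ []) (k : ℕ), shiftN q k ≠ perInf β hβ


/-- if `c x' = d x'` for nonempty words `c, d` and `x' ∼ q` with `q`
a line path, then `|c| = |d|` and `c = d`. -/
theorem linePath_word_cancel {A : Type*} (X : Set (ℕ → A))
    (hX : ∀ x ∈ X, shiftN x 1 ∈ X)
    (q : ℕ → A) (hq : IsLinePath X q)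
    (c d : List A) (hc : c ≠ []) (hd : d ≠ [])
    (x' : ℕ → A) (hx' : x' ∈ X) (hx'q : tailEq x' q)
    (h : wcat c x' = wcat d x') :
    c.length = d.length ∧ c = d := by
  -- If x' were periodic, we contradict the line-path property of q.
  have hnotper : ∀ p : ℕ, 0 < p → ¬ (∀ k, x' (k + p) = x' k) := by
    intro p hp hper
    obtain ⟨n, m, hnm⟩ := hx'q
    have hmod : ∀ k, x' k = x' (k % p) := by
      intro k
      induction k using Nat.strong_induction_on with
      | _ k ih =>
        rcases lt_or_ge k p with hk | hk
        · rw [Nat.mod_eq_of_lt hk]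
        · have hk' : k = (k - p) + p := by omega
          rw [hk', hper, ih (k - p) (by omega), Nat.add_mod_right]
    set β : List A := List.ofFn (fun i : Fin p => x' (i + n)) with hβdef
    have hβlen : β.length = p := by simp [hβdef]
    have hβne : β ≠ [] := by
      intro hβ
      rw [hβ] at hβlen
      simp at hβlen; omega
    apply hq.2.2 β hβne m
    rw [← hnm]
    funext k
    have h1 : shiftN x' n k = x' ((k % p) + n) := by
      simp only [shiftN]
      rw [hmod (k + n), hmod (k % p + n)]
      congr 1
      simp [Nat.add_mod]

    have h2 : perInf β hβne k = x' ((k % p) + n) := by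
      simp only [perInf, hβdef]
      rw [List.get_ofFn]
      congr 1
      simp [hβlen]
    rw [h1, h2]
  -- length cancellation helper
  have hlen : ∀ (c d : List A), c.length < d.length →
      wcat c x' = wcat d x' → False := by
    intro c d hlt heq
    set p := d.length - c.length with hp
    apply hnotper p (by omega)
    intro k
    have h1 := congrFun heq (k + d.length)
    simp only [wcat] at h1
    rw [dif_neg (by omega), dif_neg (by omega)] at h1
    have e1 : k + d.length - c.length = k + p := by omega
    have e2 : k + d.length - d.length = k := by omega
    rw [e1, e2] at h1
    exact h1
  have hlens : c.length = d.length := by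
    rcases lt_trichotomy c.length d.length with hl | hl | hl
    · exact absurd (hlen c d hl h) (by simp)
    · exact hl
    · exact absurd (hlen d c hl h.symm) (by simp)
  refine ⟨hlens, ?_⟩
  apply List.ext_get hlens
  intro i hi hi'
  have h1 := congrFun h i
  simp only [wcat] at h1
  rw [dif_pos hi, dif_pos hi'] at h1
  exact h1
end

section
/- Let X be a subshift, R a commutative unital ring, and ℙ the free R-module on {δ_x : x ∈ X}. For finite words α, β in the language of X, define S_β, S_α* by composing the letterwise operators, and let P_{C(α,β)}(δ_x) = [x ∈ C(α,β)]·δ_x where C(α,β) = {βx ∈ X : αx ∈ X}. Then S_β S_α* S_α S_β* = P_{C(α,β)} as endomorphisms of ℙ. -/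
variable {A : Type*} (R : Type*) [CommRing R] (X : Set (ℕ → A))

open Classical

/-- Projection `P_B(δ_x) = [x ∈ B] δ_x` on the free module on `X`. -/
noncomputable def Pop (B : Set (ℕ → A)) : (↥X →₀ R) →ₗ[R] (↥X →₀ R) :=
  Finsupp.lsum R fun x => if (x : ℕ → A) ∈ B then Finsupp.lsingle x else 0

/-- `S_a(δ_x) = [ax ∈ X] δ_{ax}`. -/
noncomputable def Sop (a : A) : (↥X →₀ R) →ₗ[R] (↥X →₀ R) :=
  Finsupp.lsum R fun x =>
    if h : wcat [a] (x : ℕ → A) ∈ X then Finsupp.lsingle (⟨wcat [a] (x : ℕ → A), h⟩ : ↥X) else 0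

/-- `S_a^*(δ_x) = [x₀ = a] δ_{σ(x)}`, needing shift invariance of `X`. -/
noncomputable def SstarOp (hX : ∀ x ∈ X, shiftN x 1 ∈ X) (a : A) :
    (↥X →₀ R) →ₗ[R] (↥X →₀ R) :=
  Finsupp.lsum R fun x =>
    if (x : ℕ → A) 0 = a then
      Finsupp.lsingle (⟨shiftN (x : ℕ → A) 1, hX x x.2⟩ : ↥X) else 0

/-- `S_α = S_{α₁} ∘ ⋯ ∘ S_{αₙ}`. -/
noncomputable def SwordOp (β : List A) : (↥X →₀ R) →ₗ[R] (↥X →₀ R) :=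
  (β.map (Sop R X)).foldr (· ∘ₗ ·) LinearMap.id

/-- `S_α^* = S_{αₙ}^* ∘ ⋯ ∘ S_{α₁}^*`. -/
noncomputable def SstarWordOp (hX : ∀ x ∈ X, shiftN x 1 ∈ X) (α : List A) :
    (↥X →₀ R) →ₗ[R] (↥X →₀ R) :=
  (α.map (SstarOp R X hX)).foldl (fun acc f => f ∘ₗ acc) LinearMap.id

/-- `C(α,β) = {βx ∈ X : αx ∈ X}`. -/
def Cset (α β : List A) : Set (ℕ → A) :=
  {y | ∃ x : ℕ → A, y = wcat β x ∧ wcat β x ∈ X ∧ wcat α x ∈ X}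

/-- The cylinder `Z_μ`. -/
def Zcyl (μ : List A) : Set (ℕ → A) := {y | y ∈ X ∧ ∃ x : ℕ → A, y = wcat μ x}

/-- `ℙ_{[x]}`: the submodule spanned by `{δ_y : y ∼ x}`. -/
noncomputable def Pclass (x : ℕ → A) : Submodule R (↥X →₀ R) :=
  Submodule.span R {f | ∃ y : ↥X, tailEq (y : ℕ → A) x ∧ f = Finsupp.single y (1 : R)}


section Aux

variable {A : Type*}

theorem shiftN_zero (x : ℕ → A) : shiftN x 0 = x := rfl

theorem shiftN_shiftN (x : ℕ → A) (n m : ℕ) : shiftN (shiftN x n) m = shiftN x (m + n) := by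
  funext k; simp [shiftN, Nat.add_assoc]

theorem shiftN_mem {X : Set (ℕ → A)} (hX : ∀ x ∈ X, shiftN x 1 ∈ X) {x : ℕ → A}
    (hx : x ∈ X) (n : ℕ) : shiftN x n ∈ X := by
  induction n with
  | zero => simpa [shiftN_zero] using hx
  | succ n ih =>
    have := hX _ ih
    rw [shiftN_shiftN, Nat.one_add] at this
    exact this

theorem wcat_cons (a : A) (w : List A) (x : ℕ → A) :
    wcat (a :: w) x = wcat [a] (wcat w x) := by
  funext n
  simp only [wcat, List.length_cons, List.length_nil, Nat.zero_add]
  rcases n with _ | n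
  · simp
  · split_ifs with h1 h2 h3 <;>
      first
        | omega
        | simp
        | (congr 1; omega)

theorem shiftN_wcat (w : List A) (x : ℕ → A) : shiftN (wcat w x) w.length = x := by
  funext k
  simp only [shiftN, wcat]
  rw [dif_neg (by omega)]
  congr 1; omega

theorem shiftN_wcat_one (a : A) (w : List A) (x : ℕ → A) :
    shiftN (wcat (a :: w) x) 1 = wcat w x := by
  funext k
  simp only [shiftN, wcat, List.length_cons]
  rcases lt_or_ge k w.length with h | h
  · rw [dif_pos (by omega), dif_pos h]; simp
  · rw [dif_neg (by omega), dif_neg (by omega)]; congr 1; omega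

/-- `x` starts with the word `w`. -/
def startsWith (x : ℕ → A) (w : List A) : Prop :=
  ∀ i (h : i < w.length), x i = w.get ⟨i, h⟩

theorem startsWith_nil (x : ℕ → A) : startsWith x [] := by
  intro i h; simp at h

theorem startsWith_cons (x : ℕ → A) (a : A) (w : List A) :
    startsWith x (a :: w) ↔ x 0 = a ∧ startsWith (shiftN x 1) w := by
  constructor
  · intro h
    refine ⟨h 0 (by simp), fun i hi => ?_⟩
    simpa [shiftN] using h (i + 1) (by simpa using Nat.succ_lt_succ hi)
  · rintro ⟨h0, h1⟩ i hi
    rcases i with _ | i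
    · simpa using h0
    · simpa [shiftN] using h1 i (by simpa using Nat.lt_of_succ_lt_succ hi)

theorem startsWith_wcat (w : List A) (x : ℕ → A) : startsWith (wcat w x) w := by
  intro i h; simp [wcat, h]

theorem wcat_shiftN {x : ℕ → A} {w : List A} (h : startsWith x w) :
    wcat w (shiftN x w.length) = x := by
  funext n
  simp only [wcat, shiftN]
  split
  · exact (h n ‹_›).symm
  · congr 1; omega

end Aux

section Ops

variable {A : Type*} (R : Type*) [CommRing R] (X : Set (ℕ → A))

theorem Sop_single (a : A) (x : ↥X) :
    Sop R X a (Finsupp.single x 1) =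
      if h : wcat [a] (x : ℕ → A) ∈ X then
        Finsupp.single (⟨wcat [a] (x : ℕ → A), h⟩ : ↥X) (1 : R) else 0 := by
  rw [Sop, Finsupp.lsum_single]
  split <;> simp

theorem SstarOp_single (hX : ∀ x ∈ X, shiftN x 1 ∈ X) (a : A) (x : ↥X) :
    SstarOp R X hX a (Finsupp.single x 1) =
      if (x : ℕ → A) 0 = a then
        Finsupp.single (⟨shiftN (x : ℕ → A) 1, hX x x.2⟩ : ↥X) (1 : R) else 0 := by
  rw [SstarOp, Finsupp.lsum_single]
  split <;> simp

theorem SwordOp_cons (a : A) (w : List A) :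
    SwordOp R X (a :: w) = Sop R X a ∘ₗ SwordOp R X w := rfl

theorem SwordOp_single (hX : ∀ x ∈ X, shiftN x 1 ∈ X) (w : List A) (x : ↥X) :
    SwordOp R X w (Finsupp.single x 1) =
      if h : wcat w (x : ℕ → A) ∈ X then
        Finsupp.single (⟨wcat w (x : ℕ → A), h⟩ : ↥X) (1 : R) else 0 := by
  induction w generalizing x with
  | nil =>
    have hx : wcat [] (x : ℕ → A) = (x : ℕ → A) := by funext n; simp [wcat]
    rw [dif_pos (by rw [hx]; exact x.2)]
    simp [SwordOp, hx]
  | cons a w ih =>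
    rw [SwordOp_cons, LinearMap.comp_apply, ih]
    by_cases hw : wcat w (x : ℕ → A) ∈ X
    · rw [dif_pos hw, Sop_single]
      by_cases hc : wcat (a :: w) (x : ℕ → A) ∈ X
      · rw [dif_pos hc]
        have : wcat [a] (wcat w (x : ℕ → A)) ∈ X := by rw [← wcat_cons]; exact hc
        rw [dif_pos this]
        congr 1
        exact Subtype.ext (wcat_cons a w (x : ℕ → A)).symm
      · rw [dif_neg hc, dif_neg (by rw [← wcat_cons]; exact hc)]
    · rw [dif_neg hw, map_zero]
      have hc : wcat (a :: w) (x : ℕ → A) ∉ X := fun hc => by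
        have := hX _ hc
        rw [shiftN_wcat_one] at this
        exact hw this
      rw [dif_neg hc]

theorem foldl_comp (l : List ((↥X →₀ R) →ₗ[R] (↥X →₀ R))) (g : (↥X →₀ R) →ₗ[R] (↥X →₀ R)) :
    l.foldl (fun acc f => f ∘ₗ acc) g =
      (l.foldl (fun acc f => f ∘ₗ acc) LinearMap.id) ∘ₗ g := by
  induction l generalizing g with
  | nil => simp
  | cons f l ih =>
    simp only [List.foldl_cons]
    rw [ih (f ∘ₗ g), ih (f ∘ₗ LinearMap.id)]
    simp [LinearMap.comp_assoc]

theorem SstarWordOp_cons (hX : ∀ x ∈ X, shiftN x 1 ∈ X) (a : A) (w : List A) :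
    SstarWordOp R X hX (a :: w) = SstarWordOp R X hX w ∘ₗ SstarOp R X hX a := by
  rw [SstarWordOp, List.map_cons, List.foldl_cons, foldl_comp, ← SstarWordOp]
  simp

theorem SstarWordOp_single (hX : ∀ x ∈ X, shiftN x 1 ∈ X) (w : List A) (x : ↥X) :
    SstarWordOp R X hX w (Finsupp.single x 1) =
      if startsWith (x : ℕ → A) w then
        Finsupp.single (⟨shiftN (x : ℕ → A) w.length,
          shiftN_mem hX x.2 w.length⟩ : ↥X) (1 : R) else 0 := by
  induction w generalizing x with
  | nil =>
    rw [if_pos (startsWith_nil _)]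
    simp [SstarWordOp, shiftN_zero]
  | cons a w ih =>
    rw [SstarWordOp_cons, LinearMap.comp_apply, SstarOp_single]
    by_cases h0 : (x : ℕ → A) 0 = a
    · rw [if_pos h0, ih]
      by_cases hw : startsWith (shiftN (x : ℕ → A) 1) w
      · rw [if_pos hw, if_pos ((startsWith_cons _ _ _).2 ⟨h0, hw⟩)]
        congr 1
      · rw [if_neg hw, if_neg (fun hc => hw ((startsWith_cons _ _ _).1 hc).2)]
    · rw [if_neg h0, map_zero,
        if_neg (fun hc => h0 ((startsWith_cons _ _ _).1 hc).1)]

theorem mem_Cset_iff (α β : List A) {x : ℕ → A} (hx : x ∈ X) :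
    x ∈ Cset X α β ↔ startsWith x β ∧ wcat α (shiftN x β.length) ∈ X := by
  constructor
  · rintro ⟨z, rfl, -, hαz⟩
    exact ⟨startsWith_wcat β z, by rwa [shiftN_wcat]⟩
  · rintro ⟨hsw, hα⟩
    exact ⟨shiftN x β.length, (wcat_shiftN hsw).symm, by rwa [wcat_shiftN hsw], hα⟩

end Ops


/-- `S_β S_α^* S_α S_β^* = P_{C(α,β)}`. -/
theorem Sword_relation {A : Type*} (R : Type*) [CommRing R]
    (X : Set (ℕ → A)) (hX : ∀ x ∈ X, shiftN x 1 ∈ X) (α β : List A)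
    (hα : inLang X α) (hβ : inLang X β) :
    SwordOp R X β ∘ₗ SstarWordOp R X hX α ∘ₗ SwordOp R X α ∘ₗ SstarWordOp R X hX β
      = Pop R X (Cset X α β) := by
  apply Finsupp.lhom_ext'
  intro x
  apply LinearMap.ext_ring
  simp only [LinearMap.comp_apply, Finsupp.lsingle_apply]
  rw [SstarWordOp_single]
  by_cases hb : startsWith (x : ℕ → A) β
  · rw [if_pos hb]
    set y : ↥X := ⟨shiftN (x : ℕ → A) β.length, shiftN_mem hX x.2 β.length⟩ with hy
    rw [SwordOp_single R X hX]
    by_cases ha : wcat α (y : ℕ → A) ∈ X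
    · rw [dif_pos ha, SstarWordOp_single, if_pos (startsWith_wcat α (y : ℕ → A))]
      have hyy : (⟨shiftN (wcat α (y : ℕ → A)) α.length,
          shiftN_mem hX ha α.length⟩ : ↥X) = y :=
        Subtype.ext (shiftN_wcat α (y : ℕ → A))
      rw [hyy, SwordOp_single R X hX]
      have hby : wcat β (y : ℕ → A) = (x : ℕ → A) := wcat_shiftN hb
      rw [dif_pos (by rw [hby]; exact x.2)]
      rw [Pop, Finsupp.lsum_single,
        if_pos ((mem_Cset_iff X α β x.2).2 ⟨hb, ha⟩)]
      simp only [Finsupp.lsingle_apply]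
      congr 1
      exact Subtype.ext hby
    · rw [dif_neg ha, map_zero, map_zero, Pop, Finsupp.lsum_single,
        if_neg (fun hc => ha (((mem_Cset_iff X α β x.2).1 hc).2))]
      simp
  · rw [if_neg hb, map_zero, map_zero, map_zero, Pop, Finsupp.lsum_single,
      if_neg (fun hc => hb (((mem_Cset_iff X α β x.2).1 hc).1))]
    simp
end

section
/- Let q be a line path in a subshift X and suppose (β, α) and (β′, α′) are both reduced initial pairs associated with (p, q), witnessed by x, x′ ∈ X respectively (p = βx = β′x′, q = αx = α′x′, with last letters of each pair distinct). If |α′| > |α| and |β′| < |β|, a contradiction arises: x′ would be periodic of the form (dc)^∞, contradicting that q is a line path. -/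
/-- `(β, α)` is a reduced initial pair associated with `(p, q)`. -/
def RedInitPair {A : Type*} (X : Set (ℕ → A)) (p q : ℕ → A) (β α : List A) : Prop :=
  inLang X β ∧ inLang X α ∧
    ∃ x ∈ X, p = wcat β x ∧ q = wcat α x ∧
      (α = [] ∨ β = [] ∨ α.getLast? ≠ β.getLast?)


lemma shift_wcat {A : Type*} (w : List A) (x : ℕ → A) :
    shiftN (wcat w x) w.length = x := by
  funext n
  simp [shiftN, wcat]

/-- two reduced initial pairs for `(p, q)` with `|α′| > |α|` and
`|β′| < |β|` yield a contradiction when `q` is a line path. -/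
theorem redInitPair_length_case_impossible {A : Type*} (X : Set (ℕ → A))
    (q : ℕ → A) (hq : IsLinePath X q) (p : ℕ → A) (hp : p ∈ X)
    (β α β' α' : List A) (x x' : ℕ → A) (hxX : x ∈ X) (hx'X : x' ∈ X)
    (hp1 : p = wcat β x) (hp2 : p = wcat β' x')
    (hq1 : q = wcat α x) (hq2 : q = wcat α' x')
    (hred : α = [] ∨ β = [] ∨ α.getLast? ≠ β.getLast?)
    (hred' : α' = [] ∨ β' = [] ∨ α'.getLast? ≠ β'.getLast?)
    (hlenα : α.length < α'.length) (hlenβ : β'.length < β.length) :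
    False := by
  have hx : x = shiftN q α.length := by rw [hq1]; exact (shift_wcat α x).symm
  have hx' : x' = shiftN q α'.length := by rw [hq2]; exact (shift_wcat α' x').symm
  have hxp : x = shiftN p β.length := by rw [hp1]; exact (shift_wcat β x).symm
  have hx'p : x' = shiftN p β'.length := by rw [hp2]; exact (shift_wcat β' x').symm
  set t := α'.length - α.length with ht
  set s := β.length - β'.length with hs
  have htpos : 0 < t := Nat.sub_pos_of_lt hlenα
  have hspos : 0 < s := Nat.sub_pos_of_lt hlenβ
  have h1 : ∀ n, x' n = x (n + t) := by
    intro n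
    rw [hx', hx]
    simp only [shiftN]
    congr 1
    omega
  have h2 : ∀ n, x n = x' (n + s) := by
    intro n
    rw [hxp, hx'p]
    simp only [shiftN]
    congr 1
    omega
  have hper : ∀ n, x' (n + (t + s)) = x' n := by
    intro n
    rw [h1 n]
    rw [h2 (n + t)]
    congr 1
    omega
  set m := t + s with hm
  have hmpos : 0 < m := by omega
  set w : List A := List.ofFn (fun i : Fin m => x' i) with hw
  have hwlen : w.length = m := by simp [hw]
  have hwne : w ≠ [] := by
    intro h
    rw [h] at hwlen
    simp at hwlen
    omega
  have key : shiftN q α'.length = perInf w hwne := by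
    funext n
    have hmod : x' n = x' (n % m) := by
      have : Function.Periodic x' m := hper
      exact (this.map_mod_nat n).symm
    have : shiftN q α'.length n = x' n := by rw [hx']
    rw [this, hmod]
    simp only [perInf, hw]
    rw [List.get_ofFn]
    congr 1
    simp only [Fin.coe_cast]
    rw [hwlen]
  exact hq.2.2 w hwne α'.length key
end
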